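/- Let G = (V,E) be a finite simple graph of maximum degree at most Δ ≥ 1 and let v₁, v₂ ∈ V be distinct. For any real α ∈ [1, e), the double-rooted tree generating function satisfies T_{G,v₁,v₂}(ln α/(αΔ)) ≤ α·ln α/(Δ(1 − ln α)). -/

import Mathlib

open Finset

set_option linter.unusedSectionVars false
set_option linter.unusedVariables false
set_option linter.unreachableTactic false
set_option linter.unusedTactic false

attribute [local instance] Classical.propDecidable

variable {V : Type} [Fintype V] [DecidableEq V]

/-- Vertex support of an edge set: the non-isolated vertices. -/
def edgeSupp (F : Finset (Sym2 V)) : Finset V :=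
  Finset.univ.filter fun v => ∃ e ∈ F, v ∈ e

/-- `F` is (the edge set of) a subtree of `G`: a connected acyclic edge subset. -/
def IsSubtree (G : SimpleGraph V) (F : Finset (Sym2 V)) : Prop :=
  F ⊆ G.edgeFinset ∧ (SimpleGraph.fromEdgeSet (↑F : Set (Sym2 V))).IsAcyclic ∧
    ∀ a ∈ edgeSupp F, ∀ b ∈ edgeSupp F,
      (SimpleGraph.fromEdgeSet (↑F : Set (Sym2 V))).Reachable a b

/-- The double-rooted tree generating function `T_{G,v₁,v₂}(x)`: the sum of `x^{|T|}` over
all subtrees `T` of `G` whose vertex set contains both `v₁` and `v₂`. -/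
noncomputable def treeSum2 (G : SimpleGraph V) (v₁ v₂ : V) (x : ℝ) : ℝ :=
  ∑ F ∈ G.edgeFinset.powerset.filter
      (fun F => IsSubtree G F ∧ v₁ ∈ edgeSupp F ∧ v₂ ∈ edgeSupp F), x ^ F.card

open SimpleGraph

/-- The simple graph on `V` whose edges are `F` (minus diagonal). -/
abbrev KG (F : Finset (Sym2 V)) : SimpleGraph V := SimpleGraph.fromEdgeSet (↑F : Set (Sym2 V))

lemma mem_edgeSupp {F : Finset (Sym2 V)} {v : V} : v ∈ edgeSupp F ↔ ∃ e ∈ F, v ∈ e := by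
  simp [edgeSupp]

lemma notDiag_of_subset {G : SimpleGraph V} {F : Finset (Sym2 V)} (hFG : F ⊆ G.edgeFinset)
    {e : Sym2 V} (he : e ∈ F) : ¬ e.IsDiag := by
  have := hFG he
  rw [mem_edgeFinset] at this
  exact G.not_isDiag_of_mem_edgeSet this

lemma kg_edgeSet {F : Finset (Sym2 V)} (hnd : ∀ e ∈ F, ¬ e.IsDiag) :
    (KG F).edgeSet = (↑F : Set (Sym2 V)) := by
  rw [edgeSet_fromEdgeSet]
  ext e
  simp only [Set.mem_diff, Set.mem_setOf_eq, Finset.mem_coe]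
  exact ⟨fun h => h.1, fun h => ⟨h, hnd e h⟩⟩

lemma kg_adj {F : Finset (Sym2 V)} {a b : V} :
    (KG F).Adj a b ↔ s(a, b) ∈ F ∧ a ≠ b := by
  rw [fromEdgeSet_adj]; simp

lemma reachable_of_mem_support {G : SimpleGraph V} {u a z : V} (w : G.Walk u a)
    (hz : z ∈ w.support) : G.Reachable u z := ⟨w.takeUntil z hz⟩

/-- The branch of `u` : edges of `F \ P` in the connected component of `u`. -/
noncomputable def branch (F P : Finset (Sym2 V)) (u : V) : Finset (Sym2 V) :=
  (F \ P).filter fun e => ∃ z ∈ e, (KG (F \ P)).Reachable u z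

lemma branch_subset (F P : Finset (Sym2 V)) (u : V) : branch F P u ⊆ F \ P :=
  Finset.filter_subset _ _

section Engine

variable {G : SimpleGraph V} {F P : Finset (Sym2 V)}

lemma mem_branch {u : V} {e : Sym2 V} :
    e ∈ branch F P u ↔ e ∈ F \ P ∧ ∃ z ∈ e, (KG (F \ P)).Reachable u z := by
  simp [branch]

/-- All endpoints of a branch edge are reachable from `u` in `KG (F \ P)`. -/
lemma branch_reach (hFG : F ⊆ G.edgeFinset) {u : V} {e : Sym2 V}
    (he : e ∈ branch F P u) : ∀ z ∈ e, (KG (F \ P)).Reachable u z := by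
  obtain ⟨heF, z, hz, hreach⟩ := mem_branch.mp he
  intro z' hz'
  induction e with
  | _ a b =>
    have hab : a ≠ b := by
      intro h
      exact notDiag_of_subset hFG ((Finset.sdiff_subset) heF) (by simp [h])
    have hadj : (KG (F \ P)).Adj a b := kg_adj.mpr ⟨heF, hab⟩
    simp only [Sym2.mem_iff] at hz hz'
    rcases hz with rfl | rfl <;> rcases hz' with rfl | rfl
    · exact hreach
    · exact hreach.trans hadj.reachable
    · exact hreach.trans hadj.symm.reachable
    · exact hreach

/-- Edges of a walk in `KG (F \ P)` starting at `u` all belong to `branch F P u`. -/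
lemma walk_edges_mem_branch {u a : V} (w : (KG (F \ P)).Walk u a) {e : Sym2 V}
    (he : e ∈ w.edges) : e ∈ branch F P u := by
  have heF : e ∈ F \ P := by
    have := w.edges_subset_edgeSet he
    rw [edgeSet_fromEdgeSet] at this
    exact this.1
  refine mem_branch.mpr ⟨heF, ?_⟩
  induction e with
  | _ b c =>
    exact ⟨b, by simp, reachable_of_mem_support w (w.fst_mem_support_of_mem_edges he)⟩

/-- Connectivity of the branch: every support vertex reachable from `u` in the branch graph. -/
lemma branch_conn (hFG : F ⊆ G.edgeFinset) {u a : V} (ha : a ∈ edgeSupp (branch F P u)) :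
    (KG (branch F P u)).Reachable u a := by
  obtain ⟨e, he, hae⟩ := mem_edgeSupp.mp ha
  have hreach : (KG (F \ P)).Reachable u a := branch_reach hFG he a hae
  obtain ⟨w⟩ := hreach
  refine ⟨w.transfer _ fun e' he' => ?_⟩
  rw [kg_edgeSet fun e'' he'' =>
    notDiag_of_subset hFG (Finset.mem_sdiff.mp (branch_subset F P u he'')).1]
  exact Finset.mem_coe.mpr (walk_edges_mem_branch w he')

/-- If the branch is nonempty then `u` is in its support. -/
lemma branch_supp (hFG : F ⊆ G.edgeFinset) {u : V} (hne : (branch F P u).Nonempty) :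
    u ∈ edgeSupp (branch F P u) := by
  obtain ⟨e, he⟩ := hne
  obtain ⟨heF, z, hz, hreach⟩ := mem_branch.mp he
  obtain ⟨w⟩ := hreach
  cases w with
  | nil => exact mem_edgeSupp.mpr ⟨e, he, hz⟩
  | cons h w' =>
    rename_i b
    have : s(u, b) ∈ branch F P u :=
      walk_edges_mem_branch (SimpleGraph.Walk.cons h w') (by simp)
    exact mem_edgeSupp.mpr ⟨s(u, b), this, by simp⟩

/-- A vertex meeting no edge of `F \ P` has empty branch. -/
lemma branch_hub_empty {v : V} (hv : ∀ e ∈ F \ P, v ∉ e) : branch F P v = ∅ := by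
  rw [Finset.eq_empty_iff_forall_notMem]
  intro e he
  obtain ⟨heF, z, hz, hreach⟩ := mem_branch.mp he
  obtain ⟨w⟩ := hreach
  cases w with
  | nil => exact hv e heF hz
  | cons h w' =>
    rename_i b
    have : s(v, b) ∈ F \ P := (kg_adj.mp h).1
    exact hv _ this (by simp)

/-- Two branches at distinct vertices connected by a `P`-path are disjoint. -/
lemma branch_disjoint (hFG : F ⊆ G.edgeFinset) (hac : (KG F).IsAcyclic)
    {u u' : V} (hne : u ≠ u')
    (hsep : ∃ q : (KG F).Walk u u', q.IsPath ∧ ∀ e ∈ q.edges, e ∈ P) :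
    Disjoint (branch F P u) (branch F P u') := by
  rw [Finset.disjoint_left]
  intro e he he'
  obtain ⟨z, hz, hr⟩ := (mem_branch.mp he).2
  have hr' : (KG (F \ P)).Reachable u' z := branch_reach hFG he' z hz
  have hru : (KG (F \ P)).Reachable u u' := hr.trans hr'.symm
  obtain ⟨w⟩ := hru
  -- transfer to KG F
  have hmono : (KG (F \ P)) ≤ (KG F) := fromEdgeSet_mono (by
    intro e' he'; exact Finset.mem_coe.mpr ((Finset.mem_sdiff.mp (Finset.mem_coe.mp he')).1))
  have hwe : ∀ e' ∈ w.edges, e' ∈ (KG F).edgeSet := by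
    intro e' he'
    have := w.edges_subset_edgeSet he'
    rw [edgeSet_fromEdgeSet] at this ⊢
    exact ⟨Finset.mem_coe.mpr (Finset.mem_sdiff.mp (Finset.mem_coe.mp this.1)).1, this.2⟩
  have hwnotP : ∀ e' ∈ w.edges, e' ∉ P := by
    intro e' he'
    have := w.edges_subset_edgeSet he'
    rw [edgeSet_fromEdgeSet] at this
    exact (Finset.mem_sdiff.mp (Finset.mem_coe.mp this.1)).2
  set w2 := w.transfer (KG F) hwe with hw2
  have hw2e : w2.edges = w.edges := SimpleGraph.Walk.edges_transfer w hwe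
  -- the path obtained from w2
  set q' : (KG F).Path u u' := w2.toPath with hq'
  obtain ⟨q, hqp, hqP⟩ := hsep
  have huniq := isAcyclic_iff_path_unique.mp hac q' ⟨q, hqp⟩
  -- q' is nonempty since u ≠ u', and its edges avoid P
  have hq'el : ∀ e' ∈ (q' : (KG F).Walk u u').edges, e' ∉ P := by
    intro e' he'
    exact hwnotP e' (hw2e ▸ SimpleGraph.Walk.edges_toPath_subset w2 he')
  cases hq'' : (q' : (KG F).Walk u u') with
  | nil => exact hne rfl
  | cons h w' =>
    rename_i b
    have hmem : s(u, b) ∈ (q' : (KG F).Walk u u').edges := by rw [hq'']; simp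
    have hmem2 := hmem
    rw [huniq] at hmem2
    exact hq'el _ hmem (hqP _ hmem2)

/-- Coverage: walking towards `r0`, every vertex is `KG (F \ P)`-reachable from some `u ∈ R`. -/
lemma reach_attach {R : Finset V} (hePR : ∀ e ∈ P, ∀ z ∈ e, z ∈ R) :
    ∀ {a b : V} (_ : (KG F).Walk a b) (_ : b ∈ R), ∃ u ∈ R, (KG (F \ P)).Reachable u a := by
  intro a b w
  induction w with
  | nil => exact fun hbR => ⟨_, hbR, Reachable.refl _⟩
  | cons h w' ih =>
    intro hbR
    rename_i a c _
    obtain ⟨u, huR, hur⟩ := ih hbR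
    have hac : s(a, c) ∈ F := (kg_adj.mp h).1
    by_cases hP : s(a, c) ∈ P
    · exact ⟨a, hePR _ hP a (by simp), Reachable.refl a⟩
    · have : (KG (F \ P)).Adj a c := kg_adj.mpr ⟨Finset.mem_sdiff.mpr ⟨hac, hP⟩, (kg_adj.mp h).2⟩
      exact ⟨u, huR, hur.trans this.symm.reachable⟩

lemma branch_cover {R : Finset V} (hconn : ∀ a ∈ edgeSupp F, ∀ b ∈ edgeSupp F,
      (KG F).Reachable a b)
    (hePR : ∀ e ∈ P, ∀ z ∈ e, z ∈ R) {r0 : V} (hr0 : r0 ∈ R) (hr0s : r0 ∈ edgeSupp F) :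
    ∀ e ∈ F, e ∉ P → ∃ u ∈ R, e ∈ branch F P u := by
  intro e heF heP
  induction e with
  | _ a b =>
    have ha : a ∈ edgeSupp F := mem_edgeSupp.mpr ⟨s(a, b), heF, by simp⟩
    obtain ⟨w⟩ := hconn a ha r0 hr0s
    obtain ⟨u, huR, hur⟩ := reach_attach hePR w hr0
    exact ⟨u, huR, mem_branch.mpr ⟨Finset.mem_sdiff.mpr ⟨heF, heP⟩, a, by simp, hur⟩⟩

/-- Decomposition of the tree `F`: core `P` together with the branches. -/
lemma tree_eq_decomp {R : Finset V} (hconn : ∀ a ∈ edgeSupp F, ∀ b ∈ edgeSupp F,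
      (KG F).Reachable a b) (hPF : P ⊆ F)
    (hePR : ∀ e ∈ P, ∀ z ∈ e, z ∈ R) {r0 : V} (hr0 : r0 ∈ R) (hr0s : r0 ∈ edgeSupp F) :
    F = P ∪ R.biUnion (branch F P) := by
  ext e
  constructor
  · intro heF
    by_cases hP : e ∈ P
    · exact Finset.mem_union_left _ hP
    · obtain ⟨u, huR, hub⟩ := branch_cover hconn hePR hr0 hr0s e heF hP
      exact Finset.mem_union_right _ (Finset.mem_biUnion.mpr ⟨u, huR, hub⟩)
  · intro he
    rcases Finset.mem_union.mp he with h | h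
    · exact hPF h
    · obtain ⟨u, _, hub⟩ := Finset.mem_biUnion.mp h
      exact (Finset.mem_sdiff.mp (branch_subset F P u hub)).1

lemma tree_card_decomp {R : Finset V} (hFG : F ⊆ G.edgeFinset) (hac : (KG F).IsAcyclic)
    (hconn : ∀ a ∈ edgeSupp F, ∀ b ∈ edgeSupp F, (KG F).Reachable a b) (hPF : P ⊆ F)
    (hePR : ∀ e ∈ P, ∀ z ∈ e, z ∈ R) {r0 : V} (hr0 : r0 ∈ R) (hr0s : r0 ∈ edgeSupp F)
    (hsep : ∀ u ∈ R, ∀ u' ∈ R, u ≠ u' →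
      ∃ q : (KG F).Walk u u', q.IsPath ∧ ∀ e ∈ q.edges, e ∈ P) :
    F.card = P.card + ∑ u ∈ R, (branch F P u).card := by
  have hdisj : ∀ u ∈ R, ∀ u' ∈ R, u ≠ u' → Disjoint (branch F P u) (branch F P u') :=
    fun u hu u' hu' hne => branch_disjoint hFG hac hne (hsep u hu u' hu' hne)
  have hPb : Disjoint P (R.biUnion (branch F P)) := by
    rw [Finset.disjoint_right]
    intro e he
    obtain ⟨u, _, hub⟩ := Finset.mem_biUnion.mp he
    exact (Finset.mem_sdiff.mp (branch_subset F P u hub)).2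
  have hcong := congrArg Finset.card (tree_eq_decomp hconn hPF hePR hr0 hr0s)
  rw [Finset.card_union_of_disjoint hPb, Finset.card_biUnion hdisj] at hcong
  exact hcong

end Engine

lemma isAcyclic_anti {G H : SimpleGraph V} (h : H ≤ G) (hg : G.IsAcyclic) : H.IsAcyclic :=
  fun _ c hc => hg (c.mapLe h) (hc.mapLe h)

/-- Subtrees of `G` whose support contains `v`. -/
noncomputable def treesAt (G : SimpleGraph V) (v : V) : Finset (Finset (Sym2 V)) :=
  G.edgeFinset.powerset.filter fun F => IsSubtree G F ∧ v ∈ edgeSupp F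

/-- The rooted generating function. -/
noncomputable def S (G : SimpleGraph V) (v : V) (x : ℝ) : ℝ :=
  ∑ F ∈ treesAt G v, x ^ F.card

lemma mem_treesAt {G : SimpleGraph V} {v : V} {F : Finset (Sym2 V)} :
    F ∈ treesAt G v ↔ IsSubtree G F ∧ v ∈ edgeSupp F := by
  constructor
  · intro h; exact (Finset.mem_filter.mp h).2
  · intro h; exact Finset.mem_filter.mpr ⟨Finset.mem_powerset.mpr h.1.1, h⟩

lemma S_nonneg {G : SimpleGraph V} {v : V} {x : ℝ} (hx : 0 ≤ x) : 0 ≤ S G v x :=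
  Finset.sum_nonneg fun _ _ => pow_nonneg hx _

lemma empty_not_mem_treesAt {G : SimpleGraph V} {v : V} : ∅ ∉ treesAt G v := by
  intro h
  obtain ⟨e, he, _⟩ := mem_edgeSupp.mp (mem_treesAt.mp h).2
  exact absurd he (Finset.notMem_empty e)

lemma sum_insert_empty_treesAt {G : SimpleGraph V} {v : V} {x : ℝ} :
    ∑ B ∈ insert ∅ (treesAt G v), x ^ B.card = 1 + S G v x := by
  rw [Finset.sum_insert empty_not_mem_treesAt]
  simp [S]

/-- Packaging a branch as an element of `insert ∅ (treesAt G₂ u)`. -/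
lemma branch_mem_treesAt {G G₂ : SimpleGraph V} {F P : Finset (Sym2 V)}
    (hFG : F ⊆ G.edgeFinset) (hac : (KG F).IsAcyclic)
    (hsub : F \ P ⊆ G₂.edgeFinset) (u : V) :
    branch F P u ∈ insert ∅ (treesAt G₂ u) := by
  by_cases hB : branch F P u = ∅
  · simp [hB]
  · refine Finset.mem_insert.mpr (Or.inr (mem_treesAt.mpr ⟨⟨?_, ?_, ?_⟩, ?_⟩))
    · exact (branch_subset F P u).trans hsub
    · refine isAcyclic_anti (fromEdgeSet_mono ?_) hac
      intro e he
      exact Finset.mem_coe.mpr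
        (Finset.mem_sdiff.mp (branch_subset F P u (Finset.mem_coe.mp he))).1
    · intro a ha b hb
      exact ((branch_conn hFG ha).symm.trans (branch_conn hFG hb) :)
    · exact branch_supp hFG (Finset.nonempty_iff_ne_empty.mpr hB)

/-- Generic fiber bound: if every tree in `s` decomposes as the fixed core `P₀` plus
branches lying in `options u` for `u ∈ R`, then the generating sum over `s` is at most
the product formula. -/
lemma fiber_bound {x : ℝ} (hx : 0 ≤ x) (s : Finset (Finset (Sym2 V))) (R : Finset V)
    (P₀ : Finset (Sym2 V)) (options : V → Finset (Finset (Sym2 V)))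
    (hcard : ∀ F ∈ s, F.card = P₀.card + ∑ u ∈ R, (branch F P₀ u).card)
    (hrec : ∀ F ∈ s, F = P₀ ∪ R.biUnion (branch F P₀))
    (hopt : ∀ F ∈ s, ∀ u ∈ R, branch F P₀ u ∈ options u) :
    ∑ F ∈ s, x ^ F.card ≤ x ^ P₀.card * ∏ u ∈ R, ∑ B ∈ options u, x ^ B.card := by
  classical
  set g : Finset (Sym2 V) → (∀ a ∈ R, Finset (Sym2 V)) :=
    fun F => fun u _ => branch F P₀ u with hg
  set W : (∀ a ∈ R, Finset (Sym2 V)) → ℝ :=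
    fun p => x ^ P₀.card * ∏ u ∈ R.attach, x ^ (p u.1 u.2).card with hW
  have hwt : ∀ F ∈ s, x ^ F.card = W (g F) := by
    intro F hF
    rw [hW, hg]
    simp only
    rw [Finset.prod_attach R (fun u => x ^ (branch F P₀ u).card),
      Finset.prod_pow_eq_pow_sum, ← pow_add, ← hcard F hF]
  have hginj : ∀ F ∈ s, ∀ F' ∈ s, g F = g F' → F = F' := by
    intro F hF F' hF' hgf
    rw [hrec F hF, hrec F' hF']
    congr 1
    apply Finset.biUnion_congr rfl
    intro u hu
    have := congrFun (congrFun hgf u) hu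
    exact this
  calc ∑ F ∈ s, x ^ F.card = ∑ F ∈ s, W (g F) := Finset.sum_congr rfl hwt
    _ = ∑ p ∈ s.image g, W p := (Finset.sum_image hginj).symm
    _ ≤ ∑ p ∈ R.pi options, W p := by
        apply Finset.sum_le_sum_of_subset_of_nonneg
        · intro p hp
          obtain ⟨F, hF, rfl⟩ := Finset.mem_image.mp hp
          exact Finset.mem_pi.mpr fun u hu => hopt F hF u hu
        · intro p _ _
          exact mul_nonneg (pow_nonneg hx _)
            (Finset.prod_nonneg fun _ _ => pow_nonneg hx _)
    _ = x ^ P₀.card * ∏ u ∈ R, ∑ B ∈ options u, x ^ B.card := by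
        rw [Finset.prod_sum, ← Finset.mul_sum]

lemma exists_nbr_of_mem_edge {G : SimpleGraph V} {F : Finset (Sym2 V)} {e : Sym2 V} {v : V}
    (hFG : F ⊆ G.edgeFinset) (he : e ∈ F) (hv : v ∈ e) :
    ∃ w, e = s(v, w) ∧ G.Adj v w := by
  induction e with
  | _ a b =>
    have hadj : G.Adj a b := by
      have := hFG he
      rw [mem_edgeFinset, mem_edgeSet] at this
      exact this
    simp only [Sym2.mem_iff] at hv
    rcases hv with rfl | rfl
    · exact ⟨b, rfl, hadj⟩
    · exact ⟨a, Sym2.eq_swap, hadj.symm⟩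

lemma sum_powerset_pow (s : Finset V) (y : ℝ) :
    ∑ A ∈ s.powerset, y ^ A.card = (y + 1) ^ s.card := by
  have := Finset.prod_add (fun _ : V => y) (fun _ : V => (1 : ℝ)) s
  simp only [Finset.prod_const, one_pow, mul_one] at this
  rw [this]

lemma star_card {G : SimpleGraph V} {v : V} {A : Finset V} (hA : A ⊆ G.neighborFinset v) :
    (A.image (fun w => s(v, w))).card = A.card := by
  apply Finset.card_image_of_injOn
  intro w hw w' hw' hww
  have hwv : w' ≠ v := fun h => G.irrefl (h ▸ (G.mem_neighborFinset v w').mp (hA hw'))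
  rcases Sym2.eq_iff.mp hww with ⟨_, h2⟩ | ⟨h1, _⟩
  · exact h2
  · exact absurd h1.symm hwv

lemma degree_le_of_le {G G' : SimpleGraph V} (h : G' ≤ G) (w : V) :
    G'.degree w ≤ G.degree w := by
  apply Finset.card_le_card
  intro u hu
  rw [SimpleGraph.mem_neighborFinset] at hu ⊢
  exact h hu

lemma treesAt_eq_empty_of_degree_zero {G : SimpleGraph V} {v : V} (hd : G.degree v = 0) :
    treesAt G v = ∅ := by
  rw [Finset.eq_empty_iff_forall_notMem]
  intro F hF
  obtain ⟨⟨hFG, _, _⟩, hsupp⟩ := mem_treesAt.mp hF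
  obtain ⟨e, he, hv⟩ := mem_edgeSupp.mp hsupp
  obtain ⟨w, _, hadj⟩ := exists_nbr_of_mem_edge hFG he hv
  have : w ∈ G.neighborFinset v := (G.mem_neighborFinset v w).mpr hadj
  rw [SimpleGraph.degree] at hd
  rw [Finset.card_eq_zero.mp hd] at this
  exact absurd this (Finset.notMem_empty w)

lemma rooted_bound (Δ : ℕ) (x α : ℝ) (hx : 0 ≤ x) (hα : 1 ≤ α)
    (hpow : (1 + x * α) ^ Δ ≤ α) :
    ∀ (n : ℕ) (G : SimpleGraph V), (∀ w, G.degree w ≤ Δ) → G.edgeFinset.card ≤ n →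
      ∀ v, S G v x ≤ α - 1 := by
  intro n
  induction n with
  | zero =>
    intro G hdeg hcard v
    have hdv : G.degree v = 0 := by
      rw [SimpleGraph.degree, Finset.card_eq_zero, Finset.eq_empty_iff_forall_notMem]
      intro w hw
      have hadj := (G.mem_neighborFinset v w).mp hw
      have : s(v, w) ∈ G.edgeFinset := by rwa [mem_edgeFinset, mem_edgeSet]
      rw [Finset.card_eq_zero.mp (Nat.le_zero.mp hcard)] at this
      exact absurd this (Finset.notMem_empty _)
    rw [S, treesAt_eq_empty_of_degree_zero hdv, Finset.sum_empty]
    linarith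
  | succ n ih =>
    intro G hdeg hcard v
    by_cases hdv : G.degree v = 0
    · rw [S, treesAt_eq_empty_of_degree_zero hdv, Finset.sum_empty]; linarith
    -- pick a neighbor to show the smaller graph has at most n edges
    obtain ⟨w₀, hw₀⟩ := Finset.card_pos.mp (Nat.pos_of_ne_zero hdv)
    have hadj₀ := (G.mem_neighborFinset v w₀).mp hw₀
    set G' : SimpleGraph V := G.deleteEdges {e : Sym2 V | v ∈ e} with hG'
    have hG'le : G' ≤ G := SimpleGraph.deleteEdges_le _
    have hdeg' : ∀ w, G'.degree w ≤ Δ := fun w => (le_of_eq (by congr!)).trans ((degree_le_of_le hG'le w).trans (hdeg w))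
    have hG'edge : ∀ e, e ∈ G'.edgeFinset ↔ e ∈ G.edgeFinset ∧ v ∉ e := by
      intro e
      rw [mem_edgeFinset, mem_edgeFinset, hG', SimpleGraph.edgeSet_deleteEdges]
      simp [Set.mem_diff]
    have hcard' : G'.edgeFinset.card ≤ n := by
      have hsub : G'.edgeFinset ⊆ G.edgeFinset.erase s(v, w₀) := by
        intro e he
        rw [hG'edge] at he
        refine Finset.mem_erase.mpr ⟨?_, he.1⟩
        intro h
        exact he.2 (h ▸ (by simp : v ∈ s(v, w₀)))
      have h₀ : s(v, w₀) ∈ G.edgeFinset := by rwa [mem_edgeFinset, mem_edgeSet]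
      calc G'.edgeFinset.card ≤ (G.edgeFinset.erase s(v, w₀)).card := Finset.card_le_card hsub
        _ = G.edgeFinset.card - 1 := Finset.card_erase_of_mem h₀
        _ ≤ n := by omega
    have ih' : ∀ u, S G' u x ≤ α - 1 := ih G' (fun w => by convert hdeg' w) (by convert hcard')
    -- fibration over the set of neighbors used by the tree
    set key : Finset (Sym2 V) → Finset V :=
      fun F => (G.neighborFinset v).filter (fun w => s(v, w) ∈ F) with hkey
    set t : Finset (Finset V) := (G.neighborFinset v).powerset.filter (fun A => A.Nonempty)
      with ht
    set options : V → Finset (Finset (Sym2 V)) :=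
      fun u => if u = v then {∅} else insert ∅ (treesAt G' u) with hoptions
    have hoptv' : options v = {∅} := by rw [hoptions]; simp
    have hoptu : ∀ u, u ≠ v → options u = insert ∅ (treesAt G' u) := by
      intro u h; rw [hoptions]; simp [h]
    have hmapsto : ∀ F ∈ treesAt G v, key F ∈ t := by
      intro F hF
      obtain ⟨⟨hFG, hac, hconn⟩, hsupp⟩ := mem_treesAt.mp hF
      refine Finset.mem_filter.mpr ⟨Finset.mem_powerset.mpr (Finset.filter_subset _ _), ?_⟩
      obtain ⟨e, he, hv⟩ := mem_edgeSupp.mp hsupp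
      obtain ⟨w, rfl, hadj⟩ := exists_nbr_of_mem_edge hFG he hv
      exact ⟨w, Finset.mem_filter.mpr ⟨(G.mem_neighborFinset v w).mpr hadj, he⟩⟩
    have hfib := Finset.sum_fiberwise_of_maps_to hmapsto (fun F => x ^ F.card)
    rw [S, ← hfib]
    -- bound each fiber
    have hfiber : ∀ A ∈ t,
        ∑ F ∈ (treesAt G v).filter (fun F => key F = A), x ^ F.card ≤ (x * α) ^ A.card := by
      intro A hA
      obtain ⟨hApow, hAne⟩ := Finset.mem_filter.mp hA
      have hAnbr : A ⊆ G.neighborFinset v := Finset.mem_powerset.mp hApow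
      have hAnv : ∀ u ∈ A, u ≠ v := by
        intro u hu h
        exact G.irrefl (h ▸ (G.mem_neighborFinset v u).mp (hAnbr hu))
      have hvA : v ∉ A := fun h => hAnv v h rfl
      set P₀ : Finset (Sym2 V) := A.image (fun w => s(v, w)) with hP₀
      -- facts valid for each tree F in the fiber
      have main : ∀ F ∈ (treesAt G v).filter (fun F => key F = A),
          (F.card = P₀.card + ∑ u ∈ insert v A, (branch F P₀ u).card) ∧
          (F = P₀ ∪ (insert v A).biUnion (branch F P₀)) ∧
          (∀ u ∈ insert v A, branch F P₀ u ∈ options u) := by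
        intro F hF
        obtain ⟨hFt, hkeyF⟩ := Finset.mem_filter.mp hF
        obtain ⟨⟨hFG, hac, hconn⟩, hsupp⟩ := mem_treesAt.mp hFt
        have hPF : P₀ ⊆ F := by
          intro e he
          obtain ⟨w, hw, rfl⟩ := Finset.mem_image.mp he
          have : w ∈ key F := hkeyF ▸ hw
          exact (Finset.mem_filter.mp this).2
        have hePR : ∀ e ∈ P₀, ∀ z ∈ e, z ∈ insert v A := by
          intro e he z hz
          obtain ⟨w, hw, rfl⟩ := Finset.mem_image.mp he
          simp only [Sym2.mem_iff] at hz
          rcases hz with rfl | rfl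
          · exact Finset.mem_insert_self _ _
          · exact Finset.mem_insert_of_mem hw
        have hr0 : v ∈ insert v A := Finset.mem_insert_self _ _
        -- edges of F containing v are exactly P₀
        have hstar : ∀ e ∈ F, v ∈ e → e ∈ P₀ := by
          intro e he hv
          obtain ⟨w, rfl, hadj⟩ := exists_nbr_of_mem_edge hFG he hv
          have hwA : w ∈ A := by
            rw [← hkeyF, hkey]
            exact Finset.mem_filter.mpr ⟨(G.mem_neighborFinset v w).mpr hadj, he⟩
          exact Finset.mem_image.mpr ⟨w, hwA, rfl⟩
        have hsep : ∀ u ∈ insert v A, ∀ u' ∈ insert v A, u ≠ u' →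
            ∃ q : (KG F).Walk u u', q.IsPath ∧ ∀ e ∈ q.edges, e ∈ P₀ := by
          have hadjF : ∀ u ∈ A, (KG F).Adj v u := by
            intro u hu
            refine kg_adj.mpr ⟨?_, (hAnv u hu).symm⟩
            have : u ∈ key F := hkeyF ▸ hu
            exact (Finset.mem_filter.mp this).2
          have hedge : ∀ u ∈ A, s(v, u) ∈ P₀ := fun u hu => Finset.mem_image.mpr ⟨u, hu, rfl⟩
          intro u hu u' hu' hne
          rcases Finset.mem_insert.mp hu with rfl | huA <;>
            rcases Finset.mem_insert.mp hu' with h' | h'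
          · exact absurd h'.symm hne
          · refine ⟨SimpleGraph.Walk.cons (hadjF u' h') SimpleGraph.Walk.nil, ?_, ?_⟩
            · simp [SimpleGraph.Walk.isPath_def, hne]
            · intro e he
              simp only [SimpleGraph.Walk.edges_cons, SimpleGraph.Walk.edges_nil,
                List.mem_singleton, List.mem_cons] at he
              rcases he with rfl | h
              · exact hedge u' h'
              · exact absurd h List.not_mem_nil
          · subst h'
            refine ⟨SimpleGraph.Walk.cons (hadjF u huA).symm SimpleGraph.Walk.nil, ?_, ?_⟩
            · simp [SimpleGraph.Walk.isPath_def, hne]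
            · intro e he
              simp only [SimpleGraph.Walk.edges_cons, SimpleGraph.Walk.edges_nil,
                List.mem_cons] at he
              rcases he with rfl | h
              · rw [Sym2.eq_swap]; exact hedge u huA
              · exact absurd h List.not_mem_nil
          · refine ⟨SimpleGraph.Walk.cons (hadjF u huA).symm
              (SimpleGraph.Walk.cons (hadjF u' h') SimpleGraph.Walk.nil), ?_, ?_⟩
            · simp [SimpleGraph.Walk.isPath_def, hne, hAnv u huA, (hAnv u' h').symm]
            · intro e he
              simp only [SimpleGraph.Walk.edges_cons, SimpleGraph.Walk.edges_nil,
                List.mem_cons] at he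
              rcases he with rfl | rfl | h
              · rw [Sym2.eq_swap]; exact hedge u huA
              · exact hedge u' h'
              · exact absurd h List.not_mem_nil
        have hvnotFP : ∀ e ∈ F \ P₀, v ∉ e := by
          intro e he hv
          obtain ⟨heF, heP⟩ := Finset.mem_sdiff.mp he
          exact heP (hstar e heF hv)
        refine ⟨tree_card_decomp (G := G) hFG hac hconn hPF hePR hr0 hsupp hsep,
          tree_eq_decomp hconn hPF hePR hr0 hsupp, ?_⟩
        intro u hu
        rcases Finset.mem_insert.mp hu with rfl | huA
        · rw [hoptv']
          exact Finset.mem_singleton.mpr (branch_hub_empty hvnotFP)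
        · rw [hoptu u (hAnv u huA)]
          refine branch_mem_treesAt (G := G) hFG hac ?_ u
          intro e he
          have h' := (hG'edge e).mpr ⟨(Finset.mem_sdiff.mp he).1 |> hFG, hvnotFP e he⟩
          convert h'
      have hbound := fiber_bound hx ((treesAt G v).filter (fun F => key F = A))
        (insert v A) P₀ options
        (fun F hF => (main F hF).1) (fun F hF => (main F hF).2.1)
        (fun F hF => (main F hF).2.2)
      refine hbound.trans ?_
      rw [Finset.prod_insert hvA]
      have hoptv : ∑ B ∈ options v, x ^ B.card = 1 := by
        rw [hoptv']; simp
      rw [hoptv, one_mul, hP₀, star_card hAnbr]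
      have hprod : ∏ u ∈ A, ∑ B ∈ options u, x ^ B.card ≤ α ^ A.card := by
        rw [← Finset.prod_const]
        apply Finset.prod_le_prod
        · intro u hu
          rw [hoptu u (hAnv u hu), sum_insert_empty_treesAt]
          have := S_nonneg (G := G') (v := u) hx
          linarith
        · intro u hu
          rw [hoptu u (hAnv u hu), sum_insert_empty_treesAt]
          have := ih' u
          linarith
      calc x ^ A.card * ∏ u ∈ A, ∑ B ∈ options u, x ^ B.card
          ≤ x ^ A.card * α ^ A.card := by
            apply mul_le_mul_of_nonneg_left hprod (pow_nonneg hx _)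
        _ = (x * α) ^ A.card := (mul_pow x α A.card).symm
    -- sum over fibers
    calc ∑ A ∈ t, ∑ F ∈ (treesAt G v).filter (fun F => key F = A), x ^ F.card
        ≤ ∑ A ∈ t, (x * α) ^ A.card := Finset.sum_le_sum hfiber
      _ = (∑ A ∈ (G.neighborFinset v).powerset, (x * α) ^ A.card) - 1 := by
          rw [ht]
          rw [← Finset.sum_filter_add_sum_filter_not (G.neighborFinset v).powerset
            (fun A => A.Nonempty) (fun A => (x * α) ^ A.card)]
          have : (G.neighborFinset v).powerset.filter (fun A => ¬A.Nonempty) = {∅} := by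
            ext A
            simp only [Finset.mem_filter, Finset.mem_powerset,
              Finset.not_nonempty_iff_eq_empty, Finset.mem_singleton]
            exact ⟨fun h => h.2, fun h => ⟨h ▸ Finset.empty_subset _, h⟩⟩
          rw [this, Finset.sum_singleton, Finset.card_empty, pow_zero]
          ring
      _ = (x * α + 1) ^ (G.neighborFinset v).card - 1 := by rw [sum_powerset_pow]
      _ ≤ (1 + x * α) ^ Δ - 1 := by
          have h1 : (1 : ℝ) ≤ x * α + 1 := by nlinarith
          have h2 : (x * α + 1) ^ (G.neighborFinset v).card ≤ (x * α + 1) ^ Δ :=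
            pow_le_pow_right₀ h1 (hdeg v)
          rw [add_comm 1 (x * α)]
          linarith
      _ ≤ α - 1 := by linarith

/-! ### Counting walks -/

noncomputable def walkLists (G : SimpleGraph V) : ℕ → V → Finset (List V)
  | 0, a => {[a]}
  | (k+1), a => (G.neighborFinset a).biUnion fun w => (walkLists G k w).image (List.cons a)

lemma ne_nil_of_mem_walkLists {G : SimpleGraph V} {a : V} {k : ℕ} {ℓ : List V}
    (h : ℓ ∈ walkLists G k a) : ℓ ≠ [] := by
  cases k with
  | zero => rw [walkLists, Finset.mem_singleton] at h; subst h; simp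
  | succ k =>
    rw [walkLists] at h
    obtain ⟨w, _, hw⟩ := Finset.mem_biUnion.mp h
    obtain ⟨ℓ', _, rfl⟩ := Finset.mem_image.mp hw
    simp

lemma mem_walkLists {G : SimpleGraph V} :
    ∀ (k : ℕ) (a : V) (ℓ : List V), ℓ.length = k + 1 → ℓ.head? = some a →
      List.Chain' G.Adj ℓ → ℓ ∈ walkLists G k a := by
  intro k
  induction k with
  | zero =>
    intro a ℓ hlen hhead _
    match ℓ, hlen with
    | [b], _ =>
      simp only [List.head?] at hhead
      rw [walkLists, Finset.mem_singleton]
      injection hhead with h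
      rw [h]
  | succ k ih =>
    intro a ℓ hlen hhead hchain
    match ℓ, hlen with
    | b :: c :: t, hlen =>
      simp only [List.head?] at hhead
      have hba : b = a := by injection hhead
      have hadj : G.Adj b c := (List.isChain_cons_cons.mp hchain).1
      have hmem : (c :: t) ∈ walkLists G k c := by
        apply ih c (c :: t)
        · simpa using hlen
        · rfl
        · exact (List.isChain_cons_cons.mp hchain).2
      rw [← hba, walkLists]
      exact Finset.mem_biUnion.mpr ⟨c, (G.mem_neighborFinset b c).mpr (hba ▸ hadj),
        Finset.mem_image.mpr ⟨c :: t, hmem, rfl⟩⟩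

lemma card_walkLists_filter {G : SimpleGraph V} {Δ : ℕ} (hdeg : ∀ w, G.degree w ≤ Δ) (b : V) :
    ∀ (k : ℕ) (a : V),
      ((walkLists G (k+1) a).filter (fun ℓ => ℓ.getLast? = some b)).card ≤ Δ ^ k := by
  intro k
  induction k with
  | zero =>
    intro a
    have hsub : (walkLists G 1 a).filter (fun ℓ => ℓ.getLast? = some b) ⊆ {[a, b]} := by
      intro ℓ hℓ
      obtain ⟨hmem, hlast⟩ := Finset.mem_filter.mp hℓ
      rw [walkLists] at hmem
      obtain ⟨w, _, hw⟩ := Finset.mem_biUnion.mp hmem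
      obtain ⟨ℓ', hℓ', rfl⟩ := Finset.mem_image.mp hw
      rw [walkLists, Finset.mem_singleton] at hℓ'
      subst hℓ'
      have hw' : w = b := by simpa using hlast
      rw [Finset.mem_singleton, hw']
    calc _ ≤ ({[a, b]} : Finset (List V)).card := Finset.card_le_card hsub
      _ = 1 := rfl
      _ = Δ ^ 0 := (pow_zero Δ).symm
  | succ k ih =>
    intro a
    have heq : (walkLists G (k+2) a).filter (fun ℓ => ℓ.getLast? = some b) ⊆
        (G.neighborFinset a).biUnion fun w =>
          ((walkLists G (k+1) w).filter (fun ℓ => ℓ.getLast? = some b)).image (List.cons a) := by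
      intro ℓ hℓ
      obtain ⟨hmem, hlast⟩ := Finset.mem_filter.mp hℓ
      rw [walkLists] at hmem
      obtain ⟨w, hwN, hw⟩ := Finset.mem_biUnion.mp hmem
      obtain ⟨ℓ', hℓ', rfl⟩ := Finset.mem_image.mp hw
      have hne := ne_nil_of_mem_walkLists hℓ'
      have : ℓ'.getLast? = some b := by
        cases ℓ' with
        | nil => exact absurd rfl hne
        | cons c t => rwa [List.getLast?_cons_cons] at hlast
      exact Finset.mem_biUnion.mpr ⟨w, hwN,
        Finset.mem_image.mpr ⟨ℓ', Finset.mem_filter.mpr ⟨hℓ', this⟩, rfl⟩⟩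
    calc ((walkLists G (k+2) a).filter (fun ℓ => ℓ.getLast? = some b)).card
        ≤ _ := Finset.card_le_card heq
      _ ≤ ∑ w ∈ G.neighborFinset a,
          (((walkLists G (k+1) w).filter (fun ℓ => ℓ.getLast? = some b)).image
            (List.cons a)).card := Finset.card_biUnion_le
      _ ≤ ∑ w ∈ G.neighborFinset a, Δ ^ k := by
          apply Finset.sum_le_sum
          intro w _
          exact (Finset.card_image_le).trans (ih w)
      _ = (G.neighborFinset a).card * Δ ^ k := by rw [Finset.sum_const, smul_eq_mul]
      _ ≤ Δ * Δ ^ k := Nat.mul_le_mul_right _ (hdeg a)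
      _ = Δ ^ (k+1) := (pow_succ' Δ k).symm

lemma walk_edges_eq {G : SimpleGraph V} {a b : V} (p : G.Walk a b) :
    p.edges = p.support.zipWith (fun x y => s(x, y)) p.support.tail := by
  induction p with
  | nil => simp
  | cons h q ih =>
    rw [SimpleGraph.Walk.edges_cons, SimpleGraph.Walk.support_cons]
    rw [q.support_eq_cons]
    simp only [List.tail_cons, List.zipWith_cons_cons]
    rw [← q.support_eq_cons, ih, q.support_eq_cons]

/-- The canonical `v₁v₂`-path support list of a tree edge set. -/
noncomputable def keyPath (v₁ v₂ : V) (F : Finset (Sym2 V)) : List V :=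
  if h : (KG F).Reachable v₁ v₂ then ((Classical.choice h).toPath : (KG F).Walk v₁ v₂).support
  else []

lemma kg_le {G : SimpleGraph V} {F : Finset (Sym2 V)} (hFG : F ⊆ G.edgeFinset) :
    KG F ≤ G := by
  have h1 : (↑F : Set (Sym2 V)) ⊆ G.edgeSet := by
    intro e he
    rw [← mem_edgeFinset]
    exact hFG he
  calc KG F ≤ SimpleGraph.fromEdgeSet G.edgeSet := fromEdgeSet_mono h1
    _ = G := G.fromEdgeSet_edgeSet

lemma two_root_bound (G : SimpleGraph V) (Δ : ℕ) (hdeg : ∀ w : V, G.degree w ≤ Δ)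
    (v₁ v₂ : V) (hne : v₁ ≠ v₂) (x α : ℝ) (hx : 0 ≤ x) (hα : 1 ≤ α)
    (hroot : ∀ u, S G u x ≤ α - 1) :
    treeSum2 G v₁ v₂ x ≤
      ∑ m ∈ Finset.Icc 2 (Fintype.card V), (Δ : ℝ) ^ (m - 2) * (x ^ (m - 1) * α ^ m) := by
  classical
  set T2 : Finset (Finset (Sym2 V)) := G.edgeFinset.powerset.filter
    (fun F => IsSubtree G F ∧ v₁ ∈ edgeSupp F ∧ v₂ ∈ edgeSupp F) with hT2
  have hmemT2 : ∀ F ∈ T2, IsSubtree G F ∧ v₁ ∈ edgeSupp F ∧ v₂ ∈ edgeSupp F :=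
    fun F hF => (Finset.mem_filter.mp hF).2
  set key : Finset (Sym2 V) → List V := keyPath v₁ v₂ with hkeydef
  have hpath : ∀ F ∈ T2, ∃ p : (KG F).Walk v₁ v₂, p.IsPath ∧ key F = p.support := by
    intro F hF
    obtain ⟨⟨hFG, hac, hconn⟩, hs1, hs2⟩ := hmemT2 F hF
    have h : (KG F).Reachable v₁ v₂ := hconn v₁ hs1 v₂ hs2
    refine ⟨(Classical.choice h).toPath.1, (Classical.choice h).toPath.2, ?_⟩
    rw [hkeydef, keyPath, dif_pos h]
  set t : Finset (List V) := T2.image key with htdef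
  have hmapsto : ∀ F ∈ T2, key F ∈ t := fun F hF => Finset.mem_image_of_mem key hF
  rw [treeSum2, ← hT2, ← Finset.sum_fiberwise_of_maps_to hmapsto (fun F => x ^ F.card)]
  -- per-fiber bound
  have hfiber : ∀ ℓ ∈ t, ∑ F ∈ T2.filter (fun F => key F = ℓ), x ^ F.card ≤
      x ^ (ℓ.length - 1) * α ^ ℓ.length := by
    intro ℓ hℓ
    obtain ⟨F₀, hF₀, hkeyF₀⟩ := Finset.mem_image.mp hℓ
    obtain ⟨p₀, hp₀, hsup₀⟩ := hpath F₀ hF₀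
    rw [hkeyF₀] at hsup₀
    set P₀ : Finset (Sym2 V) := (ℓ.zipWith (fun x y => s(x, y)) ℓ.tail).toFinset with hP₀def
    set R : Finset V := ℓ.toFinset with hRdef
    have hP₀ofPath : ∀ {F : Finset (Sym2 V)} (p : (KG F).Walk v₁ v₂),
        ℓ = p.support → P₀ = p.edges.toFinset := by
      intro F p hsup
      rw [hP₀def, hsup, ← walk_edges_eq]
    have hnodup : ℓ.Nodup := hsup₀ ▸ hp₀.support_nodup
    have hP₀card : P₀.card = ℓ.length - 1 := by
      rw [hP₀ofPath p₀ hsup₀, List.toFinset_card_of_nodup hp₀.edges_nodup,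
        SimpleGraph.Walk.length_edges, hsup₀, SimpleGraph.Walk.length_support]
      omega
    have hRcard : R.card = ℓ.length := List.toFinset_card_of_nodup hnodup
    set options : V → Finset (Finset (Sym2 V)) := fun u => insert ∅ (treesAt G u)
      with hoptions
    have main : ∀ F ∈ T2.filter (fun F => key F = ℓ),
        (F.card = P₀.card + ∑ u ∈ R, (branch F P₀ u).card) ∧
        (F = P₀ ∪ R.biUnion (branch F P₀)) ∧
        (∀ u ∈ R, branch F P₀ u ∈ options u) := by
      intro F hF
      obtain ⟨hFT2, hkeyF⟩ := Finset.mem_filter.mp hF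
      obtain ⟨⟨hFG, hac, hconn⟩, hs1, hs2⟩ := hmemT2 F hFT2
      obtain ⟨p, hp, hsup⟩ := hpath F hFT2
      rw [hkeyF] at hsup
      have hP₀edges : P₀ = p.edges.toFinset := hP₀ofPath p hsup
      have hPF : P₀ ⊆ F := by
        intro e he
        rw [hP₀edges, List.mem_toFinset] at he
        have := p.edges_subset_edgeSet he
        rw [edgeSet_fromEdgeSet] at this
        exact Finset.mem_coe.mp this.1
      have hePR : ∀ e ∈ P₀, ∀ z ∈ e, z ∈ R := by
        intro e he z hz
        rw [hP₀edges, List.mem_toFinset] at he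
        rw [hRdef, hsup, List.mem_toFinset]
        induction e with
        | _ c d =>
          simp only [Sym2.mem_iff] at hz
          rcases hz with rfl | rfl
          · exact p.fst_mem_support_of_mem_edges he
          · exact p.snd_mem_support_of_mem_edges he
      have hr0 : v₁ ∈ R := by
        rw [hRdef, hsup, List.mem_toFinset]; exact p.start_mem_support
      have hsep : ∀ u ∈ R, ∀ u' ∈ R, u ≠ u' →
          ∃ q : (KG F).Walk u u', q.IsPath ∧ ∀ e ∈ q.edges, e ∈ P₀ := by
        intro u hu u' hu' hneu
        rw [hRdef, hsup, List.mem_toFinset] at hu hu'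
        have hsplit := p.take_spec hu
        have hu'' : u' ∈ ((p.takeUntil u hu).append (p.dropUntil u hu)).support := by
          rw [hsplit]; exact hu'
        rw [SimpleGraph.Walk.mem_support_append_iff] at hu''
        rcases hu'' with hcase | hcase
        · -- u' on the first part; walk from u' to u, reversed
          set T := p.takeUntil u hu with hT
          refine ⟨(T.dropUntil u' hcase).reverse, ((hp.takeUntil hu).dropUntil hcase).reverse, ?_⟩
          intro e he
          rw [SimpleGraph.Walk.edges_reverse, List.mem_reverse] at he
          have h1 : e ∈ T.edges := T.edges_dropUntil_subset hcase he
          have h2 : e ∈ p.edges := p.edges_takeUntil_subset hu h1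
          rw [hP₀edges, List.mem_toFinset]
          exact h2
        · set D := p.dropUntil u hu with hD
          refine ⟨D.takeUntil u' hcase, (hp.dropUntil hu).takeUntil hcase, ?_⟩
          intro e he
          have h1 : e ∈ D.edges := D.edges_takeUntil_subset hcase he
          have h2 : e ∈ p.edges := p.edges_dropUntil_subset hu h1
          rw [hP₀edges, List.mem_toFinset]
          exact h2
      refine ⟨tree_card_decomp (G := G) hFG hac hconn hPF hePR hr0 hs1 hsep,
        tree_eq_decomp hconn hPF hePR hr0 hs1, ?_⟩
      intro u hu
      exact branch_mem_treesAt (G := G) hFG hac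
        (fun e he => hFG (Finset.mem_sdiff.mp he).1) u
    have hbound := fiber_bound hx (T2.filter (fun F => key F = ℓ)) R P₀ options
      (fun F hF => (main F hF).1) (fun F hF => (main F hF).2.1)
      (fun F hF => (main F hF).2.2)
    refine hbound.trans ?_
    rw [hP₀card]
    apply mul_le_mul_of_nonneg_left _ (pow_nonneg hx _)
    calc ∏ u ∈ R, ∑ B ∈ options u, x ^ B.card
        ≤ ∏ u ∈ R, α := by
          apply Finset.prod_le_prod
          · intro u _
            rw [hoptions]
            simp only
            rw [sum_insert_empty_treesAt]
            have := S_nonneg (G := G) (v := u) hx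
            linarith
          · intro u _
            rw [hoptions]
            simp only
            rw [sum_insert_empty_treesAt]
            have := hroot u
            linarith
      _ = α ^ R.card := Finset.prod_const α
      _ = α ^ ℓ.length := by rw [hRcard]
  -- facts about the lengths of keys
  have hkeyfacts : ∀ ℓ ∈ t, 2 ≤ ℓ.length ∧ ℓ.length ≤ Fintype.card V ∧
      ℓ ∈ (walkLists G (ℓ.length - 1) v₁).filter (fun ℓ' => ℓ'.getLast? = some v₂) := by
    intro ℓ hℓ
    obtain ⟨F₀, hF₀, hkeyF₀⟩ := Finset.mem_image.mp hℓ
    obtain ⟨⟨hFG, hac, hconn⟩, hs1, hs2⟩ := hmemT2 F₀ hF₀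
    obtain ⟨p₀, hp₀, hsup₀⟩ := hpath F₀ hF₀
    rw [hkeyF₀] at hsup₀
    have hlen : ℓ.length = p₀.length + 1 := by rw [hsup₀, SimpleGraph.Walk.length_support]
    have hp₀pos : 1 ≤ p₀.length := by
      by_contra h
      push_neg at h
      exact hne (SimpleGraph.Walk.eq_of_length_eq_zero (p := p₀) (by omega))
    have h2 : 2 ≤ ℓ.length := by omega
    have hnodup : ℓ.Nodup := hsup₀ ▸ hp₀.support_nodup
    refine ⟨h2, hnodup.length_le_card, Finset.mem_filter.mpr ⟨?_, ?_⟩⟩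
    · have hch : List.Chain' (KG F₀).Adj ℓ := by
        rw [hsup₀]; exact SimpleGraph.Walk.isChain_adj_support p₀
      exact mem_walkLists (ℓ.length - 1) v₁ ℓ (by omega) (by rw [hsup₀, p₀.support_eq_cons]; rfl)
        (hch.imp (fun a b hab => kg_le hFG hab))
    · rw [hsup₀, List.getLast?_eq_getLast p₀.support_ne_nil, p₀.getLast_support]
  -- sum over keys, fibered by length
  have hmapsto2 : ∀ ℓ ∈ t, ℓ.length ∈ Finset.Icc 2 (Fintype.card V) := by
    intro ℓ hℓ
    obtain ⟨h1, h2, _⟩ := hkeyfacts ℓ hℓ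
    exact Finset.mem_Icc.mpr ⟨h1, h2⟩
  calc ∑ ℓ ∈ t, ∑ F ∈ T2.filter (fun F => key F = ℓ), x ^ F.card
      ≤ ∑ ℓ ∈ t, x ^ (ℓ.length - 1) * α ^ ℓ.length := Finset.sum_le_sum hfiber
    _ = ∑ m ∈ Finset.Icc 2 (Fintype.card V), ∑ ℓ ∈ t.filter (fun ℓ => ℓ.length = m),
          x ^ (ℓ.length - 1) * α ^ ℓ.length :=
        (Finset.sum_fiberwise_of_maps_to hmapsto2 _).symm
    _ ≤ ∑ m ∈ Finset.Icc 2 (Fintype.card V), (Δ : ℝ) ^ (m - 2) * (x ^ (m - 1) * α ^ m) := by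
        apply Finset.sum_le_sum
        intro m hm
        obtain ⟨hm2, hmN⟩ := Finset.mem_Icc.mp hm
        have hterm : ∀ ℓ ∈ t.filter (fun ℓ => ℓ.length = m),
            x ^ (ℓ.length - 1) * α ^ ℓ.length = x ^ (m - 1) * α ^ m := by
          intro ℓ hℓ
          rw [(Finset.mem_filter.mp hℓ).2]
        rw [Finset.sum_congr rfl hterm, Finset.sum_const, nsmul_eq_mul]
        apply mul_le_mul_of_nonneg_right _ (by positivity)
        -- count the fiber
        have hsub : t.filter (fun ℓ => ℓ.length = m) ⊆
            (walkLists G (m - 1) v₁).filter (fun ℓ' => ℓ'.getLast? = some v₂) := by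
          intro ℓ hℓ
          obtain ⟨hℓt, hℓm⟩ := Finset.mem_filter.mp hℓ
          have := (hkeyfacts ℓ hℓt).2.2
          rwa [hℓm] at this
        have hcount : (t.filter (fun ℓ => ℓ.length = m)).card ≤ Δ ^ (m - 2) := by
          have hb := card_walkLists_filter hdeg v₂ (m - 2) v₁
          have : m - 2 + 1 = m - 1 := by omega
          rw [this] at hb
          exact (Finset.card_le_card hsub).trans hb
        calc ((t.filter (fun ℓ => ℓ.length = m)).card : ℝ) ≤ ((Δ ^ (m - 2) : ℕ) : ℝ) := by
              exact_mod_cast hcount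
          _ = (Δ : ℝ) ^ (m - 2) := by push_cast; ring

lemma geom_tail (r : ℝ) (hr0 : 0 ≤ r) (hr1 : r < 1) (N : ℕ) :
    ∑ m ∈ Finset.Icc 2 N, r ^ (m - 1) ≤ r / (1 - r) := by
  have h1mr : (0:ℝ) < 1 - r := by linarith
  have hshift : ∑ m ∈ Finset.Icc 2 N, r ^ (m - 1) = ∑ j ∈ Finset.Icc 1 (N - 1), r ^ j := by
    apply Finset.sum_nbij' (fun m => m - 1) (fun j => j + 1) <;> intros a ha <;>
      simp only [Finset.mem_Icc] at * <;> first
        | omega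
        | (congr 1)
  rw [hshift]
  set M := N - 1 + 1 with hM
  have hins : Finset.range M = insert 0 (Finset.Icc 1 (N - 1)) := by
    ext j
    simp only [Finset.mem_range, Finset.mem_insert, Finset.mem_Icc, hM]
    omega
  have h0 : (0:ℕ) ∉ Finset.Icc 1 (N - 1) := by simp
  have hgeom := geom_sum_mul r M
  rw [hins, Finset.sum_insert h0, pow_zero] at hgeom
  -- (1 + S)(r - 1) = r^M - 1, so S (1 - r) = r - r^M ≤ r
  rw [le_div_iff₀ h1mr]
  have hpowM : (0:ℝ) ≤ r ^ M := pow_nonneg hr0 M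
  nlinarith [hgeom]

/-- For a graph of maximum degree at most `Δ ≥ 1`, distinct vertices `v₁, v₂` and
`α ∈ [1, e)`, `T_{G,v₁,v₂}(ln α/(αΔ)) ≤ α ln α / (Δ(1 - ln α))`. -/
theorem treeSum2_le (G : SimpleGraph V) (Δ : ℕ) (hΔ : 1 ≤ Δ)
    (hdeg : ∀ w : V, G.degree w ≤ Δ) (v₁ v₂ : V) (hne : v₁ ≠ v₂)
    (α : ℝ) (hα : 1 ≤ α) (hα' : α < Real.exp 1) :
    treeSum2 G v₁ v₂ (Real.log α / (α * Δ)) ≤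
      α * Real.log α / (Δ * (1 - Real.log α)) := by
  set Δr : ℝ := (Δ : ℝ) with hΔrdef
  have hΔr : (1:ℝ) ≤ Δr := by rw [hΔrdef]; exact_mod_cast hΔ
  have hΔ0 : (0:ℝ) < Δr := by linarith
  have hα0 : (0:ℝ) < α := by linarith
  set r := Real.log α with hr
  have hr0 : 0 ≤ r := Real.log_nonneg hα
  have hr1 : r < 1 := by
    have h := Real.log_lt_log hα0 hα'
    rwa [Real.log_exp, ← hr] at h
  set x : ℝ := r / (α * Δr) with hxdef
  have hx : 0 ≤ x := div_nonneg hr0 (by positivity)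
  have hxα : x * α = r / Δr := by
    rw [hxdef]; field_simp
  have hpow : (1 + x * α) ^ Δ ≤ α := by
    have h1 : 1 + x * α ≤ Real.exp (x * α) := by
      have := Real.add_one_le_exp (x * α); linarith
    have h2 : (1 + x * α) ^ Δ ≤ (Real.exp (x * α)) ^ Δ := by
      apply pow_le_pow_left₀ _ h1 Δ
      have : 0 ≤ x * α := mul_nonneg hx (le_of_lt hα0)
      linarith
    have h3 : (Real.exp (x * α)) ^ Δ = Real.exp (Δr * (x * α)) := (Real.exp_nat_mul _ Δ).symm
    have h4 : Δr * (x * α) = r := by rw [hxα]; field_simp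
    rw [h3, h4, hr, Real.exp_log hα0] at h2
    exact h2
  have hroot : ∀ u, S G u x ≤ α - 1 :=
    rooted_bound Δ x α hx hα hpow G.edgeFinset.card G hdeg le_rfl
  have hmain := two_root_bound G Δ hdeg v₁ v₂ hne x α hx hα hroot
  refine hmain.trans ?_
  have hterm : ∀ m ∈ Finset.Icc 2 (Fintype.card V),
      Δr ^ (m - 2) * (x ^ (m - 1) * α ^ m) = (α / Δr) * r ^ (m - 1) := by
    intro m hm
    obtain ⟨hm2, _⟩ := Finset.mem_Icc.mp hm
    obtain ⟨j, rfl⟩ : ∃ j, m = j + 2 := ⟨m - 2, by omega⟩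
    have e1 : j + 2 - 2 = j := by omega
    have e2 : j + 2 - 1 = j + 1 := by omega
    rw [e1, e2, hxdef, div_pow]
    field_simp
    ring
  rw [Finset.sum_congr rfl hterm, ← Finset.mul_sum]
  have hgt := geom_tail r hr0 hr1 (Fintype.card V)
  have h1mr : (0:ℝ) < 1 - r := by linarith
  calc α / Δr * ∑ m ∈ Finset.Icc 2 (Fintype.card V), r ^ (m - 1)
      ≤ α / Δr * (r / (1 - r)) := by
        apply mul_le_mul_of_nonneg_left hgt (by positivity)
    _ = α * r / (Δr * (1 - r)) := by
        field_simp
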